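/- For a prime p and positive integers n, s, the greatest common divisor of the binomial coefficients C(p^n, 1), C(p^n, 2), ..., C(p^n, s) equals p^c where c = max(n - floor(log_p s), 0). -/

import Mathlib

lemma factorization_choose_prime_pow_aux {p n k : ℕ} (hp : p.Prime) (hkn : k ≤ p ^ n)
    (hk0 : k ≠ 0) :
    ((p ^ n).choose k).factorization p + k.factorization p = n := by
  have h := Nat.Prime.emultiplicity_choose_prime_pow_add_emultiplicity hp hkn hk0
  rw [(Nat.finiteMultiplicity_iff.2 ⟨hp.ne_one, Nat.pos_of_ne_zero hk0⟩).emultiplicity_eq_multiplicity,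
    (Nat.finiteMultiplicity_iff.2 ⟨hp.ne_one, Nat.choose_pos hkn⟩).emultiplicity_eq_multiplicity,
    Nat.multiplicity_eq_factorization hp hk0,
    Nat.multiplicity_eq_factorization hp (Nat.choose_pos hkn).ne'] at h
  exact_mod_cast h

/-- For a prime `p` and positive integers `n`, `s`, the gcd of the binomial coefficients
`C(p^n, 1), …, C(p^n, s)` equals `p ^ c` where `c = max (n - ⌊log_p s⌋) 0`
(natural subtraction). -/
theorem gcd_choose_prime_pow (p n s : ℕ) (hp : p.Prime) (hn : 0 < n) (hs : 0 < s) :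
    (Finset.Icc 1 s).gcd (Nat.choose (p ^ n)) = p ^ (n - Nat.log p s) := by
  set t := Nat.log p s with ht
  by_cases h : n ≤ t
  · -- then p ^ n ≤ s, and C(p^n, p^n) = 1 is in the range, so gcd = 1
    have hpn : p ^ n ≤ s :=
      le_trans (Nat.pow_le_pow_right hp.one_lt.le h) (Nat.pow_log_le_self p hs.ne')
    have hmem : p ^ n ∈ Finset.Icc 1 s :=
      Finset.mem_Icc.2 ⟨Nat.one_le_pow _ _ hp.pos, hpn⟩
    have hd : (Finset.Icc 1 s).gcd (Nat.choose (p ^ n)) ∣ 1 := by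
      have := Finset.gcd_dvd (f := Nat.choose (p ^ n)) hmem
      simpa [Nat.choose_self] using this
    rw [Nat.sub_eq_zero_of_le h, pow_zero]
    exact Nat.dvd_one.mp hd
  · push_neg at h
    have hts : p ^ t ≤ s := Nat.pow_log_le_self p hs.ne'
    have hspow : s < p ^ n :=
      lt_of_lt_of_le (Nat.lt_pow_succ_log_self hp.one_lt s)
        (Nat.pow_le_pow_right hp.one_lt.le h)
    apply Nat.dvd_antisymm
    · -- gcd ∣ p ^ (n - t)
      have hmem1 : (1 : ℕ) ∈ Finset.Icc 1 s := Finset.mem_Icc.2 ⟨le_refl 1, hs⟩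
      have hmemt : p ^ t ∈ Finset.Icc 1 s :=
        Finset.mem_Icc.2 ⟨Nat.one_le_pow _ _ hp.pos, hts⟩
      have hd1 : (Finset.Icc 1 s).gcd (Nat.choose (p ^ n)) ∣ p ^ n := by
        have := Finset.gcd_dvd (f := Nat.choose (p ^ n)) hmem1
        simpa [Nat.choose_one_right] using this
      obtain ⟨a, ha, ha2⟩ := (Nat.dvd_prime_pow hp).mp hd1
      have hdt : p ^ a ∣ (p ^ n).choose (p ^ t) :=
        ha2 ▸ Finset.gcd_dvd (f := Nat.choose (p ^ n)) hmemt
      have hfac : ((p ^ n).choose (p ^ t)).factorization p + t = n := by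
        have := factorization_choose_prime_pow_aux hp (le_of_lt (lt_of_le_of_lt hts hspow))
          (pow_ne_zero t hp.pos.ne')
        simpa [hp.factorization_self] using this
      have hale : a ≤ ((p ^ n).choose (p ^ t)).factorization p :=
        (hp.pow_dvd_iff_le_factorization
          (Nat.choose_pos (le_of_lt (lt_of_le_of_lt hts hspow))).ne').mp hdt
      rw [ha2]
      exact pow_dvd_pow p (by omega)
    · -- p ^ (n - t) ∣ gcd
      apply Finset.dvd_gcd
      intro i hi
      obtain ⟨hi1, hi2⟩ := Finset.mem_Icc.mp hi
      have hi0 : i ≠ 0 := by omega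
      have hin : i ≤ p ^ n := le_of_lt (lt_of_le_of_lt hi2 hspow)
      have hfac : ((p ^ n).choose i).factorization p + i.factorization p = n :=
        factorization_choose_prime_pow_aux hp hin hi0
      have hfi : i.factorization p ≤ t := by
        have hdvd : p ^ i.factorization p ∣ i := Nat.ordProj_dvd i p
        have hle : p ^ i.factorization p ≤ s :=
          le_trans (Nat.le_of_dvd (Nat.pos_of_ne_zero hi0) hdvd) hi2
        exact (Nat.le_log_iff_pow_le hp.one_lt hs.ne').mpr hle
      exact (hp.pow_dvd_iff_le_factorization (Nat.choose_pos hin).ne').mpr (by omega)
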